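/- For a triangle-free graph G and k ≥ 2, property (E_k) holds if and only if property (E_k') holds. -/

import Mathlib

variable {V : Type*}

/-- A finite set of vertices is independent if its elements are pairwise nonadjacent. -/
def IndepSet (G : SimpleGraph V) (S : Finset V) : Prop :=
  ∀ x ∈ S, ∀ y ∈ S, x ≠ y → ¬ G.Adj x y

/-- Property `(E_k)`: for every `A` with `|A| ≤ k` and every independent `B ⊆ A`
there is a vertex adjacent to every vertex of `B` and to no vertex of `A \ B`. -/
def PropEk (G : SimpleGraph V) (k : ℕ) : Prop :=
  ∀ A : Finset V, A.card ≤ k → ∀ B ⊆ A, IndepSet G B →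
    ∃ v, (∀ x ∈ B, G.Adj v x) ∧ ∀ x ∈ A, x ∉ B → ¬ G.Adj v x

/-- Property `(E_k')`: for every independent `A` with `|A| = k` and every `B ⊆ A`
there is a vertex adjacent to every vertex of `B` and to no vertex of `A \ B`;
moreover every independent set of fewer than `k` vertices is contained in an
independent set of cardinality `k`. -/
def PropEk' (G : SimpleGraph V) (k : ℕ) : Prop :=
  (∀ A : Finset V, A.card = k → IndepSet G A → ∀ B ⊆ A,
    ∃ v, (∀ x ∈ B, G.Adj v x) ∧ ∀ x ∈ A, x ∉ B → ¬ G.Adj v x) ∧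
  (∀ S : Finset V, S.card < k → IndepSet G S →
    ∃ A : Finset V, S ⊆ A ∧ IndepSet G A ∧ A.card = k)

/-- Property `(Adj_k)`: every independent set of at most `k` vertices has a
common neighbor. -/
def PropAdjk (G : SimpleGraph V) (k : ℕ) : Prop :=
  ∀ S : Finset V, S.card ≤ k → IndepSet G S → ∃ v, ∀ x ∈ S, G.Adj v x

namespace Stmt14Aux

variable (G : SimpleGraph V)

lemma noTri [DecidableEq V] (hG : G.CliqueFree 3) {a b c : V} (hab : G.Adj a b) (hac : G.Adj a c)
    (hbc : G.Adj b c) : False :=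
  hG {a, b, c} (SimpleGraph.is3Clique_triple_iff.mpr ⟨hab, hac, hbc⟩)

lemma indep_mono {A B : Finset V} (h : B ⊆ A) (hA : IndepSet G A) : IndepSet G B :=
  fun x hx y hy hxy => hA x (h hx) y (h hy) hxy

lemma indep_insert [DecidableEq V] {W : Finset V} {g : V} (hW : IndepSet G W)
    (h : ∀ x ∈ W, ¬ G.Adj g x) : IndepSet G (insert g W) := by
  intro x hx y hy hxy hadj
  rcases Finset.mem_insert.1 hx with hx' | hx' <;> rcases Finset.mem_insert.1 hy with hy' | hy'
  · exact hxy (hx'.trans hy'.symm)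
  · exact h y hy' (hx' ▸ hadj)
  · exact h x hx' ((hy' ▸ hadj : G.Adj x g)).symm
  · exact hW x hx' y hy' hxy hadj

lemma indep_union [DecidableEq V] {W D : Finset V} (hW : IndepSet G W) (hD : IndepSet G D)
    (h : ∀ d ∈ D, ∀ w ∈ W, ¬ G.Adj d w) : IndepSet G (W ∪ D) := by
  intro x hx y hy hxy
  rcases Finset.mem_union.1 hx with hx | hx <;> rcases Finset.mem_union.1 hy with hy | hy
  · exact hW x hx y hy hxy
  · exact fun hadj => h y hy x hx hadj.symm
  · exact h x hx y hy
  · exact hD x hx y hy hxy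

/-- Every finite set contains a maximal independent subset. -/
lemma maxIndep [DecidableEq V] (C : Finset V) :
    ∃ D ⊆ C, IndepSet G D ∧ ∀ c ∈ C, c ∉ D → ∃ d ∈ D, G.Adj c d := by
  classical
  have hne : (C.powerset.filter fun D => IndepSet G D).Nonempty :=
    ⟨∅, Finset.mem_filter.mpr ⟨Finset.empty_mem_powerset C, fun x hx => absurd hx (Finset.notMem_empty x)⟩⟩
  obtain ⟨D, hD, hmax⟩ := Finset.exists_max_image _ Finset.card hne
  rw [Finset.mem_filter, Finset.mem_powerset] at hD
  refine ⟨D, hD.1, hD.2, ?_⟩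
  intro c hc hcD
  by_contra hno
  push_neg at hno
  have hins : IndepSet G (insert c D) := by
    refine indep_insert G hD.2 ?_
    intro x hx hadj
    exact hno x hx hadj
  have hmem : insert c D ∈ C.powerset.filter fun D => IndepSet G D := by
    rw [Finset.mem_filter, Finset.mem_powerset]
    exact ⟨Finset.insert_subset hc hD.1, hins⟩
  have := hmax _ hmem
  rw [Finset.card_insert_of_notMem hcD] at this
  omega

variable {G}

section Cover

/-- Key covering lemma: we can enlarge an independent set `W` (disjoint from and
nonadjacent to the remaining part `C` of `C0`, where all of `C0 \ C` already has
neighbors in `W`) to an independent `W'` of size at most `k`, still disjoint from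
`C0`, such that every vertex of `C0` has a neighbor in `W'`. -/
lemma cover [DecidableEq V] (hG : G.CliqueFree 3) {k : ℕ}
    (h1 : ∀ A : Finset V, A.card = k → IndepSet G A → ∀ B ⊆ A,
      ∃ v, (∀ x ∈ B, G.Adj v x) ∧ ∀ x ∈ A, x ∉ B → ¬ G.Adj v x)
    (hext : ∀ S : Finset V, IndepSet G S → S.card ≤ k →
      ∃ I, S ⊆ I ∧ IndepSet G I ∧ I.card = k)
    (C0 : Finset V) : ∀ n (C W : Finset V), C.card ≤ n → C ⊆ C0 →
    IndepSet G W →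
    (∀ c ∈ C, ∀ w ∈ W, ¬ G.Adj c w) →
    (∀ c ∈ C0, (∃ w ∈ W, G.Adj w c) ∨ c ∈ C) →
    (∀ w ∈ W, w ∉ C0) →
    W.card + C.card ≤ k →
    ∃ W', W ⊆ W' ∧ IndepSet G W' ∧ W'.card ≤ k ∧
      (∀ c ∈ C0, ∃ w ∈ W', G.Adj w c) ∧ (∀ w ∈ W', w ∉ C0) := by
  classical
  intro n
  induction n with
  | zero =>
    intro C W hCn hC0 hW hCW hcov hWC0 hcard
    have hC : C = ∅ := Finset.card_eq_zero.mp (Nat.le_zero.mp hCn)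
    subst hC
    refine ⟨W, Finset.Subset.refl _, hW, by omega, ?_, hWC0⟩
    intro c hc
    rcases hcov c hc with h | h
    · exact h
    · simp at h
  | succ n ih =>
    intro C W hCn hC0 hW hCW hcov hWC0 hcard
    by_cases hCe : C = ∅
    · subst hCe
      refine ⟨W, Finset.Subset.refl _, hW, by omega, ?_, hWC0⟩
      intro c hc
      rcases hcov c hc with h | h
      · exact h
      · simp at h
    · have hCne : C.Nonempty := Finset.nonempty_iff_ne_empty.mpr hCe
      obtain ⟨D, hDC, hDindep, hDmax⟩ := maxIndep G C
      have hDne : D.Nonempty := by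
        obtain ⟨c, hc⟩ := hCne
        by_cases hcD : c ∈ D
        · exact ⟨c, hcD⟩
        · obtain ⟨d, hd, -⟩ := hDmax c hc hcD
          exact ⟨d, hd⟩
      have hDpos : 1 ≤ D.card := Finset.card_pos.mpr hDne
      have hDcardC : D.card ≤ C.card := Finset.card_le_card hDC
      have hDW : ∀ d ∈ D, ∀ w ∈ W, ¬ G.Adj d w := fun d hd => hCW d (hDC hd)
      have hWD_indep : IndepSet G (W ∪ D) := indep_union G hW hDindep hDW
      have hDnotW : ∀ d ∈ D, d ∉ W := fun d hd hw => hWC0 d hw (hC0 (hDC hd))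
      have hcardWD : (W ∪ D).card ≤ k := by
        calc (W ∪ D).card ≤ W.card + D.card := Finset.card_union_le _ _
        _ ≤ k := by omega
      -- the set of vertices of `C \ D` adjacent to all of `D`
      set Z : Finset V := C.filter (fun z => z ∉ D ∧ ∀ d ∈ D, G.Adj z d) with hZdef
      -- common facts about the recursive call with `C \ D` and a new guard `g`
      have hCDcard : (C \ D).card = C.card - D.card := Finset.card_sdiff_of_subset hDC
      by_cases hZ : Z = ∅
      · -- no vertex of `C \ D` is adjacent to all of `D`
        obtain ⟨I, hI1, hI2, hI3⟩ := hext (W ∪ D) hWD_indep hcardWD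
        obtain ⟨g, hg1, hg2⟩ := h1 I hI3 hI2 D
          (Finset.Subset.trans Finset.subset_union_right hI1)
        have hgW : ∀ w ∈ W, ¬ G.Adj g w := by
          intro w hw
          exact hg2 w (hI1 (Finset.mem_union_left _ hw)) (fun hwD => hDnotW w hwD hw)
        have hgC0 : g ∉ C0 := by
          intro hgC0'
          rcases hcov g hgC0' with ⟨w, hw, hadj⟩ | hgC
          · exact hgW w hw hadj.symm
          · by_cases hgD : g ∈ D
            · exact G.loopless.irrefl g (hg1 g hgD)
            · have hnotZ : g ∉ Z := by rw [hZ]; exact Finset.notMem_empty g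
              rw [hZdef, Finset.mem_filter] at hnotZ
              push_neg at hnotZ
              obtain ⟨d, hd, hnadj⟩ := hnotZ hgC hgD
              exact hnadj (hg1 d hd)
        have hnewindep : IndepSet G (insert g W) := indep_insert G hW hgW
        have hnewCW : ∀ c ∈ C \ D, ∀ w ∈ insert g W, ¬ G.Adj c w := by
          intro c hc w hw
          rcases Finset.mem_insert.1 hw with rfl | hw
          · rw [Finset.mem_sdiff] at hc
            obtain ⟨d, hd, hcd⟩ := hDmax c hc.1 hc.2
            intro hadj
            exact noTri G hG (hg1 d hd) hadj.symm hcd.symm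
          · exact hCW c (Finset.mem_sdiff.1 hc).1 w hw
        have hnewcov : ∀ c ∈ C0, (∃ w ∈ insert g W, G.Adj w c) ∨ c ∈ C \ D := by
          intro c hc
          rcases hcov c hc with ⟨w, hw, hadj⟩ | hcC
          · exact Or.inl ⟨w, Finset.mem_insert_of_mem hw, hadj⟩
          · by_cases hcD : c ∈ D
            · exact Or.inl ⟨g, Finset.mem_insert_self _ _, hg1 c hcD⟩
            · exact Or.inr (Finset.mem_sdiff.mpr ⟨hcC, hcD⟩)
        have hnewWC0 : ∀ w ∈ insert g W, w ∉ C0 := by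
          intro w hw
          rcases Finset.mem_insert.1 hw with rfl | hw
          · exact hgC0
          · exact hWC0 w hw
        obtain ⟨W', hW'1, hW'2, hW'3, hW'4, hW'5⟩ := ih (C \ D) (insert g W)
          (by omega) (Finset.Subset.trans (Finset.sdiff_subset) hC0) hnewindep hnewCW
          hnewcov hnewWC0
          (by
            have := Finset.card_insert_le g W
            omega)
        exact ⟨W', Finset.Subset.trans (Finset.subset_insert _ _) hW'1, hW'2, hW'3,
          hW'4, hW'5⟩
      · -- some vertex of `C \ D` is adjacent to all of `D`
        have hZne : Z.Nonempty := Finset.nonempty_iff_ne_empty.mpr hZ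
        obtain ⟨z0, hz0⟩ := hZne
        rw [hZdef, Finset.mem_filter] at hz0
        have hDltC : D.card < C.card := by
          have hsub : D ⊆ C.erase z0 := fun d hd =>
            Finset.mem_erase.mpr ⟨fun h => hz0.2.1 (h ▸ hd), hDC hd⟩
          have h1' := Finset.card_le_card hsub
          have h2' := Finset.card_erase_of_mem hz0.1
          have h3' := Finset.card_pos.mpr ⟨z0, hz0.1⟩
          omega
        obtain ⟨I, hI1, hI2, hI3⟩ := hext (W ∪ D) hWD_indep hcardWD
        have hlt : (W ∪ D).card < I.card := by
          have := Finset.card_union_le W D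
          omega
        have hnsub : ¬ I ⊆ W ∪ D := fun h => absurd (Finset.card_le_card h) (by omega)
        obtain ⟨w, hwI, hwWD⟩ := Finset.not_subset.mp hnsub
        have hwW : w ∉ W := fun h => hwWD (Finset.mem_union_left _ h)
        have hwD : w ∉ D := fun h => hwWD (Finset.mem_union_right _ h)
        have hwnadj : ∀ x ∈ W ∪ D, ¬ G.Adj w x := by
          intro x hx hadj
          exact hI2 w hwI x (hI1 hx) (G.ne_of_adj hadj) hadj
        have hwC : w ∉ C := by
          intro hwC'
          obtain ⟨d, hd, hadj⟩ := hDmax w hwC' hwD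
          exact hwnadj d (Finset.mem_union_right _ hd) hadj
        have hwC0 : w ∉ C0 := by
          intro h
          rcases hcov w h with ⟨w', hw', hadj⟩ | hwC'
          · exact hwnadj w' (Finset.mem_union_left _ hw') hadj.symm
          · exact hwC hwC'
        by_cases ha : ∃ c ∈ C, G.Adj w c
        · -- `w` is itself a useful guard
          obtain ⟨c0, hc0C, hc0adj⟩ := ha
          set C' : Finset V := C.filter (fun c => ¬ G.Adj w c) with hC'def
          have hC'sub : C' ⊆ C.erase c0 := by
            intro c hc
            rw [hC'def, Finset.mem_filter] at hc
            exact Finset.mem_erase.mpr ⟨fun h => hc.2 (h ▸ hc0adj), hc.1⟩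
          have hC'card : C'.card ≤ C.card - 1 := by
            have h1' := Finset.card_le_card hC'sub
            have h2' := Finset.card_erase_of_mem hc0C
            omega
          have hCpos : 1 ≤ C.card := Finset.card_pos.mpr hCne
          have hnewindep : IndepSet G (insert w W) :=
            indep_insert G hW (fun x hx => hwnadj x (Finset.mem_union_left _ hx))
          have hnewCW : ∀ c ∈ C', ∀ w' ∈ insert w W, ¬ G.Adj c w' := by
            intro c hc w' hw'
            rw [hC'def, Finset.mem_filter] at hc
            rcases Finset.mem_insert.1 hw' with rfl | hw'
            · exact fun hadj => hc.2 hadj.symm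
            · exact hCW c hc.1 w' hw'
          have hnewcov : ∀ c ∈ C0, (∃ w' ∈ insert w W, G.Adj w' c) ∨ c ∈ C' := by
            intro c hc
            rcases hcov c hc with ⟨w', hw', hadj⟩ | hcC
            · exact Or.inl ⟨w', Finset.mem_insert_of_mem hw', hadj⟩
            · by_cases hwc : G.Adj w c
              · exact Or.inl ⟨w, Finset.mem_insert_self _ _, hwc⟩
              · exact Or.inr (by rw [hC'def, Finset.mem_filter]; exact ⟨hcC, hwc⟩)
          have hnewWC0 : ∀ w' ∈ insert w W, w' ∉ C0 := by
            intro w' hw'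
            rcases Finset.mem_insert.1 hw' with rfl | hw'
            · exact hwC0
            · exact hWC0 w' hw'
          obtain ⟨W', hW'1, hW'2, hW'3, hW'4, hW'5⟩ := ih C' (insert w W)
            (by omega) (Finset.Subset.trans (Finset.filter_subset _ _) hC0) hnewindep
            hnewCW hnewcov hnewWC0
            (by
              have := Finset.card_insert_le w W
              omega)
          exact ⟨W', Finset.Subset.trans (Finset.subset_insert _ _) hW'1, hW'2, hW'3,
            hW'4, hW'5⟩
        · -- `w` is nonadjacent to all of `C`: use it to certify a guard for `D`
          push_neg at ha
          have hS2indep : IndepSet G (insert w (W ∪ D)) := indep_insert G hWD_indep hwnadj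
          have hS2card : (insert w (W ∪ D)).card ≤ k := by
            have h1' := Finset.card_insert_le w (W ∪ D)
            have h2' := Finset.card_union_le W D
            omega
          obtain ⟨I2, hI21, hI22, hI23⟩ := hext _ hS2indep hS2card
          have hBsub : insert w D ⊆ I2 := by
            intro x hx
            rcases Finset.mem_insert.1 hx with rfl | hx
            · exact hI21 (Finset.mem_insert_self _ _)
            · exact hI21 (Finset.mem_insert_of_mem (Finset.mem_union_right _ hx))
          obtain ⟨g, hg1, hg2⟩ := h1 I2 hI23 hI22 (insert w D) hBsub
          have hgD : ∀ d ∈ D, G.Adj g d := fun d hd => hg1 d (Finset.mem_insert_of_mem hd)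
          have hgW : ∀ w' ∈ W, ¬ G.Adj g w' := by
            intro w' hw'
            refine hg2 w' (hI21 (Finset.mem_insert_of_mem (Finset.mem_union_left _ hw'))) ?_
            intro hmem
            rcases Finset.mem_insert.1 hmem with rfl | hmem
            · exact hwW hw'
            · exact hDnotW w' hmem hw'
          have hgC0 : g ∉ C0 := by
            intro hgC0'
            rcases hcov g hgC0' with ⟨w', hw', hadj⟩ | hgC
            · exact hgW w' hw' hadj.symm
            · exact ha g hgC (hg1 w (Finset.mem_insert_self _ _)).symm
          have hnewindep : IndepSet G (insert g W) := indep_insert G hW hgW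
          have hnewCW : ∀ c ∈ C \ D, ∀ w' ∈ insert g W, ¬ G.Adj c w' := by
            intro c hc w' hw'
            rcases Finset.mem_insert.1 hw' with rfl | hw'
            · rw [Finset.mem_sdiff] at hc
              obtain ⟨d, hd, hcd⟩ := hDmax c hc.1 hc.2
              intro hadj
              exact noTri G hG (hgD d hd) hadj.symm hcd.symm
            · exact hCW c (Finset.mem_sdiff.1 hc).1 w' hw'
          have hnewcov : ∀ c ∈ C0, (∃ w' ∈ insert g W, G.Adj w' c) ∨ c ∈ C \ D := by
            intro c hc
            rcases hcov c hc with ⟨w', hw', hadj⟩ | hcC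
            · exact Or.inl ⟨w', Finset.mem_insert_of_mem hw', hadj⟩
            · by_cases hcD : c ∈ D
              · exact Or.inl ⟨g, Finset.mem_insert_self _ _, hgD c hcD⟩
              · exact Or.inr (Finset.mem_sdiff.mpr ⟨hcC, hcD⟩)
          have hnewWC0 : ∀ w' ∈ insert g W, w' ∉ C0 := by
            intro w' hw'
            rcases Finset.mem_insert.1 hw' with rfl | hw'
            · exact hgC0
            · exact hWC0 w' hw'
          obtain ⟨W', hW'1, hW'2, hW'3, hW'4, hW'5⟩ := ih (C \ D) (insert g W)
            (by omega) (Finset.Subset.trans (Finset.sdiff_subset) hC0) hnewindep hnewCW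
            hnewcov hnewWC0
            (by
              have := Finset.card_insert_le g W
              omega)
          exact ⟨W', Finset.Subset.trans (Finset.subset_insert _ _) hW'1, hW'2, hW'3,
            hW'4, hW'5⟩

end Cover

end Stmt14Aux

open Stmt14Aux in
theorem stmt_14 [Fintype V] (G : SimpleGraph V) (hG : G.CliqueFree 3)
    (k : ℕ) (hk : 2 ≤ k) : PropEk G k ↔ PropEk' G k := by
  classical
  constructor
  · -- E_k → E_k'
    intro hEk
    constructor
    · intro A hA hAindep B hB
      exact hEk A (le_of_eq hA) B hB (indep_mono G hB hAindep)
    · -- extension property, by growing one vertex at a time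
      have grow : ∀ S : Finset V, IndepSet G S → S.card < k →
          ∃ T, S ⊆ T ∧ IndepSet G T ∧ T.card = S.card + 1 := by
        intro S hS hSk
        by_cases hSe : S = ∅
        · subst hSe
          obtain ⟨v, -, -⟩ := hEk ∅ (by simp) ∅ (Finset.Subset.refl _) hS
          refine ⟨{v}, Finset.empty_subset _, ?_, by simp⟩
          intro x hx y hy hxy
          rw [Finset.mem_singleton] at hx hy
          exact absurd (hx.trans hy.symm) hxy
        · have hSne : S.Nonempty := Finset.nonempty_iff_ne_empty.mpr hSe
          obtain ⟨v, hv1, -⟩ := hEk S (le_of_lt hSk) S (Finset.Subset.refl _) hS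
          have hvS : v ∉ S := fun h => G.loopless.irrefl v (hv1 v h)
          have hcard : (insert v S).card ≤ k := by
            rw [Finset.card_insert_of_notMem hvS]; omega
          obtain ⟨w, -, hw2⟩ := hEk (insert v S) hcard ∅ (Finset.empty_subset _)
            (fun x hx => absurd hx (Finset.notMem_empty x))
          have hwS : w ∉ S := by
            intro hwS'
            exact hw2 v (Finset.mem_insert_self _ _) (Finset.notMem_empty v) (hv1 w hwS').symm
          refine ⟨insert w S, Finset.subset_insert _ _, ?_,
            Finset.card_insert_of_notMem hwS⟩
          refine indep_insert G hS ?_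
          intro x hx
          exact hw2 x (Finset.mem_insert_of_mem hx) (Finset.notMem_empty x)
      have aux : ∀ n (S : Finset V), IndepSet G S → S.card + n = k →
          ∃ A : Finset V, S ⊆ A ∧ IndepSet G A ∧ A.card = k := by
        intro n
        induction n with
        | zero => intro S hS hcard; exact ⟨S, Finset.Subset.refl _, hS, by omega⟩
        | succ n ih =>
          intro S hS hcard
          obtain ⟨T, hST, hT, hTcard⟩ := grow S hS (by omega)
          obtain ⟨A, hTA, hA, hAcard⟩ := ih T hT (by omega)
          exact ⟨A, Finset.Subset.trans hST hTA, hA, hAcard⟩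
      intro S hSk hS
      exact aux (k - S.card) S hS (by omega)
  · -- E_k' → E_k
    rintro ⟨h1, h2⟩
    have hext : ∀ S : Finset V, IndepSet G S → S.card ≤ k →
        ∃ I, S ⊆ I ∧ IndepSet G I ∧ I.card = k := by
      intro S hS hSk
      rcases lt_or_eq_of_le hSk with h | h
      · exact h2 S h hS
      · exact ⟨S, Finset.Subset.refl _, hS, h⟩
    intro A hA B hB hBindep
    set C0 : Finset V := (A \ B).filter (fun a => ∀ b ∈ B, ¬ G.Adj a b) with hC0def
    have hC0AB : C0 ⊆ A \ B := Finset.filter_subset _ _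
    have hBC0disj : ∀ b ∈ B, b ∉ C0 := by
      intro b hb hbC0
      exact (Finset.mem_sdiff.1 (hC0AB hbC0)).2 hb
    have hcard0 : B.card + C0.card ≤ k := by
      have hdisj : Disjoint B C0 := by
        rw [Finset.disjoint_left]
        exact fun a ha ha' => hBC0disj a ha ha'
      have hsub : B ∪ C0 ⊆ A := by
        intro x hx
        rcases Finset.mem_union.1 hx with hx | hx
        · exact hB hx
        · exact (Finset.mem_sdiff.1 (hC0AB hx)).1
      have := Finset.card_le_card hsub
      rw [Finset.card_union_of_disjoint hdisj] at this
      omega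
    obtain ⟨W', hBW', hW'indep, hW'card, hW'cov, -⟩ := cover hG h1 hext C0 C0.card C0 B
      (le_refl _) (Finset.Subset.refl _) hBindep
      (by
        intro c hc b hb
        rw [hC0def, Finset.mem_filter] at hc
        exact fun hadj => hc.2 b hb hadj)
      (fun c hc => Or.inr hc) hBC0disj hcard0
    obtain ⟨I, hWI, hIindep, hIcard⟩ := hext W' hW'indep hW'card
    obtain ⟨v, hv1, -⟩ := h1 I hIcard hIindep W' hWI
    refine ⟨v, fun x hx => hv1 x (hBW' hx), ?_⟩
    intro x hxA hxB hadj
    by_cases hxC0 : x ∈ C0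
    · obtain ⟨w, hw, hwx⟩ := hW'cov x hxC0
      exact noTri G hG (hv1 w hw) hadj hwx
    · have hxAB : x ∈ A \ B := Finset.mem_sdiff.mpr ⟨hxA, hxB⟩
      have : ¬ ∀ b ∈ B, ¬ G.Adj x b := by
        intro hall
        exact hxC0 (by rw [hC0def, Finset.mem_filter]; exact ⟨hxAB, hall⟩)
      push_neg at this
      obtain ⟨b, hb, hxb⟩ := this
      exact noTri G hG (hv1 b (hBW' hb)) hadj hxb.symm
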